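/- arXiv:2509.24531 — 3 statements merged into one kernel-verified Lean document; each statement's English description precedes it below -/
import Mathlib

section
/- Let E be a real inner product space, let x₀, x₁ ∈ E, let λ > 0, and let x : ℝ → E be a path such that t ↦ ‖x₁ - x t‖²/(1-t)² is integrable on [0,1]. Then ∫₀¹ ‖x₁ - x t‖² / (λ⁴ · (exp((1-t)/λ²) - 1)²) dt ≤ ∫₀¹ ‖x₁ - x t‖² / (1-t)² dt. (Equivalently, with g_t = 1 and θ_t = 1/(2λ²), the overall cost J(u*_DB) = ½∫₀¹ ‖x₁ - x_t‖²/(λ⁴(e^{(1-t)/λ²}-1)²) dt of the Diffusion Bridge optimal controller is at most the cost J(u*_FM) = ½∫₀¹ ‖x₁ - x_t‖²/(1-t)² dt of the Flow Matching optimal controller.) -/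
open MeasureTheory

lemma key_sq_le (lam : ℝ) (hlam : 0 < lam) {s : ℝ} (hs : 0 ≤ s) :
    s ^ 2 ≤ lam ^ 4 * (Real.exp (s / lam ^ 2) - 1) ^ 2 := by
  have h1 : s / lam ^ 2 + 1 ≤ Real.exp (s / lam ^ 2) := Real.add_one_le_exp _
  have hl : (0:ℝ) < lam ^ 2 := by positivity
  have h3 : s / lam ^ 2 ≤ Real.exp (s / lam ^ 2) - 1 := by linarith
  have h4 : s ≤ lam ^ 2 * (Real.exp (s / lam ^ 2) - 1) := by
    rw [div_le_iff₀ hl] at h3; linarith [h3]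
  have h5 : s ^ 2 ≤ (lam ^ 2 * (Real.exp (s / lam ^ 2) - 1)) ^ 2 :=
    pow_le_pow_left₀ hs h4 2
  nlinarith [h5]

/-- With `g_t = 1` and `θ_t = 1/(2λ²)`, the overall cost of the Diffusion Bridge optimal
controller is at most the cost of the Flow Matching optimal controller. -/
theorem db_cost_le_fm_cost {E : Type*} [NormedAddCommGroup E] [InnerProductSpace ℝ E]
    (x₀ x₁ : E) (lam : ℝ) (hlam : 0 < lam) (x : ℝ → E)
    (hInt : IntervalIntegrable (fun t => ‖x₁ - x t‖ ^ 2 / (1 - t) ^ 2) volume 0 1) :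
    (∫ t in (0:ℝ)..1, ‖x₁ - x t‖ ^ 2 / (lam ^ 4 * (Real.exp ((1 - t) / lam ^ 2) - 1) ^ 2))
      ≤ ∫ t in (0:ℝ)..1, ‖x₁ - x t‖ ^ 2 / (1 - t) ^ 2 := by
  set f : ℝ → ℝ := fun t => ‖x₁ - x t‖ ^ 2 / (1 - t) ^ 2 with hf
  set F : ℝ → ℝ := fun t =>
    ‖x₁ - x t‖ ^ 2 / (lam ^ 4 * (Real.exp ((1 - t) / lam ^ 2) - 1) ^ 2) with hF
  set g : ℝ → ℝ := fun t =>
    (1 - t) ^ 2 / (lam ^ 4 * (Real.exp ((1 - t) / lam ^ 2) - 1) ^ 2) with hg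
  -- F = f * g
  have hFg : ∀ t, F t = f t * g t := by
    intro t
    by_cases ht : (1 : ℝ) - t = 0
    · simp [hF, hf, hg, ht]
    · have h2 : ((1 : ℝ) - t) ^ 2 ≠ 0 := pow_ne_zero _ ht
      simp only [hF, hf, hg]
      rw [div_mul_div_comm, mul_comm (‖x₁ - x t‖ ^ 2), mul_div_mul_left _ _ h2]
  have hFeq : F = fun t => f t * g t := funext hFg
  -- g is between 0 and 1 on [0,1]
  have hg01 : ∀ t ∈ Set.Icc (0:ℝ) 1, 0 ≤ g t ∧ g t ≤ 1 := by
    intro t ht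
    have hs : 0 ≤ 1 - t := by linarith [ht.2]
    constructor
    · positivity
    · by_cases ht1 : (1:ℝ) - t = 0
      · simp [hg, ht1]
      · have hs' : 0 < 1 - t := lt_of_le_of_ne hs (Ne.symm ht1)
        have hkey := key_sq_le lam hlam hs
        have hD : 0 < lam ^ 4 * (Real.exp ((1 - t) / lam ^ 2) - 1) ^ 2 :=
          lt_of_lt_of_le (by positivity) hkey
        rw [hg, div_le_one hD]
        exact hkey
  -- measurability of g
  have hgmeas : Measurable g := by
    apply Measurable.div <;> fun_prop
  -- a.e. strong measurability of f on the interval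
  have hmeasf : AEStronglyMeasurable f (volume.restrict (Set.uIoc (0:ℝ) 1)) := by
    rw [Set.uIoc_of_le (by norm_num : (0:ℝ) ≤ 1)]
    exact hInt.1.aestronglyMeasurable
  have hmeasF : AEStronglyMeasurable F (volume.restrict (Set.uIoc (0:ℝ) 1)) := by
    rw [hFeq]
    exact hmeasf.mul (hgmeas.aestronglyMeasurable.restrict)
  -- integrability of F
  have hle : ∀ᵐ t ∂(volume.restrict (Set.uIoc (0:ℝ) 1)), ‖F t‖ ≤ ‖f t‖ := by
    rw [ae_restrict_iff' measurableSet_uIoc]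
    refine Filter.Eventually.of_forall fun t ht => ?_
    have ht' : t ∈ Set.Icc (0:ℝ) 1 := by
      rw [Set.uIoc_of_le (by norm_num : (0:ℝ) ≤ 1)] at ht
      exact ⟨le_of_lt ht.1, ht.2⟩
    obtain ⟨hg0, hg1⟩ := hg01 t ht'
    rw [hFg t, Real.norm_eq_abs, Real.norm_eq_abs, abs_mul]
    calc |f t| * |g t| ≤ |f t| * 1 := by
          apply mul_le_mul_of_nonneg_left _ (abs_nonneg _)
          rw [abs_of_nonneg hg0]; exact hg1
      _ = |f t| := mul_one _
  have hFint : IntervalIntegrable F volume 0 1 := hInt.mono_fun hmeasF hle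
  -- pointwise inequality on [0,1]
  apply intervalIntegral.integral_mono_on (by norm_num) hFint hInt
  intro t ht
  obtain ⟨hg0, hg1⟩ := hg01 t ht
  rw [hFg]
  have hf0 : 0 ≤ f t := by positivity
  calc f t * g t ≤ f t * 1 := mul_le_mul_of_nonneg_left hg1 hf0
    _ = f t := mul_one _
end

section
/- Let E be a real inner product space, x₀, x₁ ∈ E, and let η : ℝ → E be a path with continuous derivative η' on [0,1], with η 0 = x₀ and η 1 = x₁. If ∫₀¹ ‖η' t‖² dt = ‖x₁ - x₀‖², then η t = x₀ + t • (x₁ - x₀) for all t ∈ [0,1]; that is, the straight-line interpolation is the unique minimizer of the energy among C¹ admissible paths. -/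
open MeasureTheory

/-- Uniqueness of the energy minimizer: a `C¹` path from `x₀` to `x₁` whose energy equals
`‖x₁ - x₀‖²` is the straight-line interpolation on `[0,1]`. -/
theorem fm_energy_minimizer_unique {E : Type*} [NormedAddCommGroup E] [InnerProductSpace ℝ E]
    (x₀ x₁ : E) (η η' : ℝ → E)
    (hderiv : ∀ t ∈ Set.Icc (0:ℝ) 1, HasDerivAt η (η' t) t)
    (hcont : ContinuousOn η' (Set.Icc (0:ℝ) 1))
    (h0 : η 0 = x₀) (h1 : η 1 = x₁)
    (henergy : (∫ t in (0:ℝ)..1, ‖η' t‖ ^ 2) = ‖x₁ - x₀‖ ^ 2) :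
    ∀ t ∈ Set.Icc (0:ℝ) 1, η t = x₀ + t • (x₁ - x₀) := by
  set v := x₁ - x₀ with hv
  have huIcc : Set.uIcc (0:ℝ) 1 = Set.Icc 0 1 := Set.uIcc_of_le zero_le_one
  have hinnercont : ContinuousOn (fun t => (inner ℝ (η' t) v : ℝ)) (Set.Icc (0:ℝ) 1) :=
    hcont.inner continuousOn_const
  have hinnerint : IntervalIntegrable (fun t => (inner ℝ (η' t) v : ℝ)) volume 0 1 :=
    (hinnercont.mono huIcc.le).intervalIntegrable
  have hnsqint : IntervalIntegrable (fun t => ‖η' t‖ ^ 2) volume 0 1 :=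
    (((hcont.norm).pow 2).mono huIcc.le).intervalIntegrable
  -- ∫₀¹ ⟪η' t, v⟫ = ‖v‖²
  have hFTCinner : (∫ t in (0:ℝ)..1, (inner ℝ (η' t) v : ℝ)) = ‖v‖ ^ 2 := by
    have h : (∫ t in (0:ℝ)..1, (inner ℝ (η' t) v : ℝ)) =
        (fun s => (inner ℝ (η s) v : ℝ)) 1 - (fun s => (inner ℝ (η s) v : ℝ)) 0 := by
      refine intervalIntegral.integral_eq_sub_of_hasDerivAt
        (f := fun s => (inner ℝ (η s) v : ℝ)) (fun t ht => ?_) hinnerint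
      rw [huIcc] at ht
      simpa using (hderiv t ht).inner ℝ (hasDerivAt_const t v)
    simp only at h
    rw [h, h0, h1, ← inner_sub_left, ← hv, real_inner_self_eq_norm_sq, sq]
  -- energy of difference is zero
  have hfcont : ContinuousOn (fun t => ‖η' t - v‖ ^ 2) (Set.Icc (0:ℝ) 1) :=
    ((hcont.sub continuousOn_const).norm).pow 2
  have hfint : IntervalIntegrable (fun t => ‖η' t - v‖ ^ 2) volume 0 1 :=
    (hfcont.mono huIcc.le).intervalIntegrable
  have hzero : (∫ t in (0:ℝ)..1, ‖η' t - v‖ ^ 2) = 0 := by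
    have hexp : ∀ t : ℝ, ‖η' t - v‖ ^ 2
        = ‖η' t‖ ^ 2 - 2 * (inner ℝ (η' t) v : ℝ) + ‖v‖ ^ 2 := fun t =>
      norm_sub_sq_real _ _
    rw [intervalIntegral.integral_congr (fun t _ => hexp t),
      intervalIntegral.integral_add ((hnsqint.sub (hinnerint.const_mul 2)))
        intervalIntegrable_const,
      intervalIntegral.integral_sub hnsqint (hinnerint.const_mul 2),
      intervalIntegral.integral_const_mul, hFTCinner, henergy,
      intervalIntegral.integral_const]
    simp only [sub_zero, smul_eq_mul, one_mul]
    ring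
  -- hence η' t = v on Icc 0 1
  have hae : (fun t => ‖η' t - v‖ ^ 2) =ᵐ[volume.restrict (Set.Icc (0:ℝ) 1)] 0 := by
    have h1' : (∫ t in Set.Ioc (0:ℝ) 1, ‖η' t - v‖ ^ 2) = 0 := by
      rw [← intervalIntegral.integral_of_le zero_le_one]; exact hzero
    have hnn : 0 ≤ᵐ[volume.restrict (Set.Ioc (0:ℝ) 1)] fun t => ‖η' t - v‖ ^ 2 :=
      Filter.Eventually.of_forall fun t => sq_nonneg _
    have hint' : IntegrableOn (fun t => ‖η' t - v‖ ^ 2) (Set.Ioc (0:ℝ) 1) volume := by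
      simpa [IntegrableOn, intervalIntegrable_iff_integrableOn_Ioc_of_le zero_le_one] using hfint
    have h2 := (integral_eq_zero_iff_of_nonneg_ae hnn hint').mp h1'
    rwa [restrict_Ioc_eq_restrict_Icc] at h2
  have heq : ∀ t ∈ Set.Icc (0:ℝ) 1, η' t = v := by
    intro t ht
    have h2 : ‖η' t - v‖ ^ 2 = 0 :=
      Measure.eqOn_Icc_of_ae_eq (volume : Measure ℝ) zero_ne_one hae hfcont
        continuousOn_const ht
    have h3 : ‖η' t - v‖ = 0 := by
      have hn := norm_nonneg (η' t - v)
      nlinarith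
    exact sub_eq_zero.mp (norm_eq_zero.mp h3)
  -- conclude via zero-derivative constancy (no completeness needed)
  have hηcont : ContinuousOn η (Set.Icc (0:ℝ) 1) := fun s hs =>
    (hderiv s hs).continuousAt.continuousWithinAt
  have hgc : ContinuousOn (fun s : ℝ => η s - x₀ - s • v) (Set.Icc (0:ℝ) 1) :=
    (hηcont.sub continuousOn_const).sub ((continuousOn_id).smul continuousOn_const)
  have key : ∀ x ∈ Set.Icc (0:ℝ) 1,
      (fun s : ℝ => η s - x₀ - s • v) x = (fun s : ℝ => η s - x₀ - s • v) 0 := by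
    apply constant_of_has_deriv_right_zero hgc
    intro x hx
    have hx' : x ∈ Set.Icc (0:ℝ) 1 := ⟨hx.1, hx.2.le⟩
    have hd : HasDerivAt (fun s : ℝ => η s - x₀ - s • v) (η' x - (1:ℝ) • v) x :=
      ((hderiv x hx').sub_const x₀).sub ((hasDerivAt_id x).smul_const v)
    rw [heq x hx'] at hd
    simpa using hd.hasDerivWithinAt
  intro t ht
  have h4 := key t ht
  simp only [h0, zero_smul, sub_zero, sub_self] at h4
  have h5 : η t - x₀ - t • v = 0 := h4
  rw [sub_sub] at h5
  exact sub_eq_zero.mp h5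
end

section
/- Let d ≥ 1 and let μ be a Borel probability measure on ℝᵈ with ∫ ‖x‖² dμ(x) < ∞. Let u : ℝᵈ → ℝ be convex, μ-integrable, and differentiable at μ-almost every x, and let T : ℝᵈ → ℝᵈ be a Borel map with T(x) = ∇u(x) for μ-almost every x and ∫ ‖T(x)‖² dμ(x) < ∞. Set ν = T_# μ. Then for every coupling γ of μ and ν, ∫ ½‖x - y‖² dγ(x,y) ≥ ∫ ½‖x - T(x)‖² dμ(x); that is, T is an optimal transport map from μ to ν for the quadratic cost c(x,y) = ½‖x - y‖². -/
open MeasureTheory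
open scoped RealInnerProductSpace

section BrenierAux

variable {E : Type*} [NormedAddCommGroup E] [InnerProductSpace ℝ E] [CompleteSpace E]

lemma brenier_subgradient_ineq {u : E → ℝ} (hconv : ConvexOn ℝ Set.univ u)
    {p x₀ : E} (hp : HasGradientAt u p x₀) (z : E) :
    ⟪p, z - x₀⟫ ≤ u z - u x₀ := by
  have hA : ConvexOn ℝ Set.univ (u ∘ (AffineMap.lineMap x₀ z : ℝ →ᵃ[ℝ] E)) := by
    simpa using hconv.comp_affineMap (AffineMap.lineMap x₀ z : ℝ →ᵃ[ℝ] E)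
  have hc : HasDerivAt (AffineMap.lineMap x₀ z : ℝ → E) (z - x₀) 0 :=
    AffineMap.hasDerivAt_lineMap
  have hf : HasFDerivAt u (InnerProductSpace.toDual ℝ E p) x₀ :=
    hasGradientAt_iff_hasFDerivAt.mp hp
  have hd : HasDerivAt (u ∘ (AffineMap.lineMap x₀ z : ℝ →ᵃ[ℝ] E)) ⟪p, z - x₀⟫ 0 := by
    have h0 : (AffineMap.lineMap x₀ z : ℝ → E) 0 = x₀ := by simp
    have := (h0 ▸ hf).comp_hasDerivAt 0 hc
    simpa [InnerProductSpace.toDual_apply_apply] using this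
  have := hA.le_slope_of_hasDerivAt (Set.mem_univ (0:ℝ)) (Set.mem_univ (1:ℝ)) zero_lt_one hd
  simpa [slope_def_field] using this

theorem brenier_main {E : Type*} [NormedAddCommGroup E] [InnerProductSpace ℝ E]
    [FiniteDimensional ℝ E] [MeasurableSpace E] [BorelSpace E]
    (μ : Measure E) [IsProbabilityMeasure μ]
    (hμ2 : Integrable (fun x => ‖x‖ ^ 2) μ)
    (u : E → ℝ) (hconv : ConvexOn ℝ Set.univ u) (hui : Integrable u μ)
    (T : E → E) (hT : Measurable T)
    (hTgrad : ∀ᵐ x ∂μ, HasGradientAt u (T x) x)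
    (hT2 : Integrable (fun x => ‖T x‖ ^ 2) μ)
    (γ : Measure (E × E)) [IsProbabilityMeasure γ]
    (hfst : γ.map Prod.fst = μ) (hsnd : γ.map Prod.snd = μ.map T) :
    (∫ x, (1/2 : ℝ) * ‖x - T x‖ ^ 2 ∂μ)
      ≤ ∫ p, (1/2 : ℝ) * ‖p.1 - p.2‖ ^ 2 ∂γ := by
  classical
  have hu_cont : Continuous u := by
    exact continuousOn_univ.mp (hconv.continuousOn isOpen_univ)
  -- the "dual potential"
  set g : E → E → ℝ := fun x y => ⟪x, y⟫ - u x with hg_def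
  have hE : Nonempty E := ⟨0⟩
  obtain ⟨seq, hseq⟩ : ∃ s : ℕ → E, DenseRange s :=
    ⟨TopologicalSpace.denseSeq E, TopologicalSpace.denseRange_denseSeq E⟩
  set V : E → EReal := fun y => ⨆ n, ((g (seq n) y : ℝ) : EReal) with hV_def
  have hg_cont : ∀ y, Continuous fun x => g x y := fun y =>
    (continuous_id.inner continuous_const).sub hu_cont
  have hV_meas : Measurable V :=
    Measurable.iSup fun n =>
      measurable_coe_real_ereal.comp
        ((continuous_const.inner continuous_id).sub continuous_const).measurable
  have hV_nebot : ∀ y, V y ≠ ⊥ := by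
    intro y h
    have : ((g (seq 0) y : ℝ) : EReal) ≤ V y := by
      simp only [hV_def]
      exact le_iSup (fun n => ((g (seq n) y : ℝ) : EReal)) 0
    rw [h] at this
    exact (EReal.coe_ne_bot _) (le_bot_iff.mp this)
  -- every value g x y is below the countable sup, by density
  have h_le_V : ∀ x y, ((g x y : ℝ) : EReal) ≤ V y := by
    intro x y
    refine le_of_forall_lt fun c hc => ?_
    induction c using EReal.rec with
    | bot => exact (hV_nebot y).bot_lt
    | top => exact absurd hc (by simp)
    | coe r =>
      have hr : r < g x y := by exact_mod_cast hc
      have hopen : IsOpen {x' | r < g x' y} := isOpen_lt continuous_const (hg_cont y)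
      obtain ⟨n, hn⟩ : ∃ n, seq n ∈ {x' | r < g x' y} := by
        have := hseq.exists_mem_open hopen ⟨x, hr⟩
        simpa using this
      calc (r : EReal) < ((g (seq n) y : ℝ) : EReal) := by exact_mod_cast hn
        _ ≤ V y := by
            simp only [hV_def]
            exact le_iSup (fun n => ((g (seq n) y : ℝ) : EReal)) n
  set v : E → ℝ := fun y => (V y).toReal with hv_def
  have hv_meas : Measurable v := hV_meas.ereal_toReal
  -- at gradient points the sup is attained
  have h_att : ∀ x₀, HasGradientAt u (T x₀) x₀ → V (T x₀) = ((g x₀ (T x₀) : ℝ) : EReal) := by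
    intro x₀ hx₀
    refine le_antisymm (iSup_le fun n => ?_) (h_le_V x₀ (T x₀))
    have h1 : ⟪T x₀, seq n - x₀⟫ ≤ u (seq n) - u x₀ :=
      brenier_subgradient_ineq hconv hx₀ (seq n)
    rw [inner_sub_right] at h1
    have : g (seq n) (T x₀) ≤ g x₀ (T x₀) := by
      simp only [hg_def]
      have e1 : ⟪T x₀, seq n⟫ = ⟪seq n, T x₀⟫ := real_inner_comm _ _
      have e2 : ⟪T x₀, x₀⟫ = ⟪x₀, T x₀⟫ := real_inner_comm _ _
      rw [e1, e2] at h1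
      linarith
    exact_mod_cast this
  have hvT : ∀ᵐ x ∂μ, v (T x) = g x (T x) := by
    filter_upwards [hTgrad] with x hx
    rw [hv_def]
    simp only [h_att x hx, EReal.toReal_coe]
  have hVT_ne_top : ∀ᵐ x ∂μ, V (T x) ≠ ⊤ := by
    filter_upwards [hTgrad] with x hx
    rw [h_att x hx]
    exact EReal.coe_ne_top _
  -- the set where V = ⊤ is null for the second marginal
  have hBmeas : MeasurableSet {y | V y = ⊤} := hV_meas (measurableSet_singleton ⊤)
  have hνB : μ.map T {y | V y = ⊤} = 0 := by
    rw [Measure.map_apply hT hBmeas]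
    have h0 := ae_iff.mp hVT_ne_top
    simp only [not_not] at h0
    simpa [Set.preimage_setOf_eq] using h0
  have hγB : ∀ᵐ p ∂γ, V p.2 ≠ ⊤ := by
    have h0 : γ (Prod.snd ⁻¹' {y | V y = ⊤}) = 0 := by
      rw [← Measure.map_apply measurable_snd hBmeas, hsnd]
      exact hνB
    rw [ae_iff]
    simp only [not_not]
    simpa [Set.preimage_setOf_eq] using h0
  -- the pointwise inequality under γ
  have h_ae_γ : ∀ᵐ p ∂γ, ⟪p.1, p.2⟫ ≤ u p.1 + v p.2 := by
    filter_upwards [hγB] with p hp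
    have h1 : ((g p.1 p.2 : ℝ) : EReal) ≤ V p.2 := h_le_V p.1 p.2
    have h2 : g p.1 p.2 ≤ v p.2 := by
      have := EReal.toReal_le_toReal h1 (EReal.coe_ne_bot _) hp
      simpa using this
    simp only [hg_def] at h2
    linarith
  -- integrability facts
  have h_inner_meas : Measurable fun x : E => ⟪x, T x⟫ :=
    continuous_inner.measurable.comp (measurable_id.prodMk hT)
  have h_inner_int_μ : Integrable (fun x => ⟪x, T x⟫) μ := by
    refine (hμ2.add hT2).mono h_inner_meas.aestronglyMeasurable ?_
    filter_upwards with x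
    have h1 : |⟪x, T x⟫| ≤ ‖x‖ * ‖T x‖ := abs_real_inner_le_norm x (T x)
    have h2 : ‖x‖ * ‖T x‖ ≤ ‖x‖ ^ 2 + ‖T x‖ ^ 2 := by nlinarith [norm_nonneg x, norm_nonneg (T x)]
    have h3 : (0:ℝ) ≤ ‖x‖ ^ 2 + ‖T x‖ ^ 2 := by positivity
    simp only [Pi.add_apply, Real.norm_eq_abs]
    rw [abs_of_nonneg h3]
    linarith
  have h_vT_int : Integrable (fun x => v (T x)) μ :=
    (h_inner_int_μ.sub hui).congr (hvT.mono fun x hx => hx.symm)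
  have h_v_int_ν : Integrable v (μ.map T) :=
    (integrable_map_measure hv_meas.aestronglyMeasurable hT.aemeasurable).mpr h_vT_int
  have h_u_int_γ : Integrable (fun p : E × E => u p.1) γ := by
    have h0 : Integrable u (γ.map Prod.fst) := hfst ▸ hui
    exact (integrable_map_measure hu_cont.stronglyMeasurable.aestronglyMeasurable
      measurable_fst.aemeasurable).mp h0
  have h_v_int_γ : Integrable (fun p : E × E => v p.2) γ := by
    have h0 : Integrable v (γ.map Prod.snd) := hsnd ▸ h_v_int_ν
    exact (integrable_map_measure hv_meas.stronglyMeasurable.aestronglyMeasurable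
      measurable_snd.aemeasurable).mp h0
  have h_n1_γ : Integrable (fun p : E × E => ‖p.1‖ ^ 2) γ := by
    have h0 : Integrable (fun x : E => ‖x‖ ^ 2) (γ.map Prod.fst) := hfst ▸ hμ2
    exact (integrable_map_measure (continuous_norm.pow 2).stronglyMeasurable.aestronglyMeasurable
      measurable_fst.aemeasurable).mp h0
  have h_n2_ν : Integrable (fun y : E => ‖y‖ ^ 2) (μ.map T) :=
    (integrable_map_measure (continuous_norm.pow 2).stronglyMeasurable.aestronglyMeasurable
      hT.aemeasurable).mpr hT2
  have h_n2_γ : Integrable (fun p : E × E => ‖p.2‖ ^ 2) γ := by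
    have h0 : Integrable (fun y : E => ‖y‖ ^ 2) (γ.map Prod.snd) := hsnd ▸ h_n2_ν
    exact (integrable_map_measure (continuous_norm.pow 2).stronglyMeasurable.aestronglyMeasurable
      measurable_snd.aemeasurable).mp h0
  have h_inner_γ_meas : Measurable fun p : E × E => (⟪p.1, p.2⟫ : ℝ) :=
    continuous_inner.measurable
  have h_inner_int_γ : Integrable (fun p : E × E => ⟪p.1, p.2⟫) γ := by
    refine (h_n1_γ.add h_n2_γ).mono h_inner_γ_meas.aestronglyMeasurable ?_
    filter_upwards with p
    have h1 : |⟪p.1, p.2⟫| ≤ ‖p.1‖ * ‖p.2‖ := abs_real_inner_le_norm p.1 p.2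
    have h2 : ‖p.1‖ * ‖p.2‖ ≤ ‖p.1‖ ^ 2 + ‖p.2‖ ^ 2 := by
      nlinarith [norm_nonneg p.1, norm_nonneg p.2]
    have h3 : (0:ℝ) ≤ ‖p.1‖ ^ 2 + ‖p.2‖ ^ 2 := by positivity
    simp only [Pi.add_apply, Real.norm_eq_abs]
    rw [abs_of_nonneg h3]
    linarith
  -- key integral inequality
  have hstep : ∫ p, ⟪p.1, p.2⟫ ∂γ ≤ ∫ p, (u p.1 + v p.2) ∂γ :=
    integral_mono_ae h_inner_int_γ (h_u_int_γ.add h_v_int_γ) h_ae_γ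
  -- transfer integrals through the marginals
  have h_int_u_γ : ∫ p, u p.1 ∂γ = ∫ x, u x ∂μ := by
    have := integral_map measurable_fst.aemeasurable
      (hu_cont.stronglyMeasurable.aestronglyMeasurable (μ := γ.map Prod.fst))
    rw [hfst] at this
    exact this.symm
  have h_int_v_γ : ∫ p, v p.2 ∂γ = ∫ y, v y ∂(μ.map T) := by
    have := integral_map measurable_snd.aemeasurable
      (hv_meas.stronglyMeasurable.aestronglyMeasurable (μ := γ.map Prod.snd))
    rw [hsnd] at this
    exact this.symm
  have h_int_v_ν : ∫ y, v y ∂(μ.map T) = ∫ x, v (T x) ∂μ :=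
    integral_map hT.aemeasurable
      (hv_meas.stronglyMeasurable.aestronglyMeasurable (μ := μ.map T))
  have h_int_vT : ∫ x, v (T x) ∂μ = (∫ x, ⟪x, T x⟫ ∂μ) - ∫ x, u x ∂μ := by
    rw [integral_congr_ae hvT]
    simp only [hg_def]
    exact integral_sub h_inner_int_μ hui
  have h_main : ∫ p, ⟪p.1, p.2⟫ ∂γ ≤ ∫ x, ⟪x, T x⟫ ∂μ := by
    have hsum : ∫ p, (u p.1 + v p.2) ∂γ = (∫ p, u p.1 ∂γ) + ∫ p, v p.2 ∂γ :=
      integral_add h_u_int_γ h_v_int_γ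
    rw [hsum, h_int_u_γ, h_int_v_γ, h_int_v_ν, h_int_vT] at hstep
    linarith
  -- marginal second moments
  have h_m1 : ∫ p, ‖p.1‖ ^ 2 ∂γ = ∫ x, ‖x‖ ^ 2 ∂μ := by
    have := integral_map measurable_fst.aemeasurable
      ((continuous_norm.pow 2).stronglyMeasurable.aestronglyMeasurable (μ := γ.map Prod.fst))
    rw [hfst] at this
    exact this.symm
  have h_m2 : ∫ p, ‖p.2‖ ^ 2 ∂γ = ∫ x, ‖T x‖ ^ 2 ∂μ := by
    have h1 := integral_map measurable_snd.aemeasurable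
      ((continuous_norm.pow 2).stronglyMeasurable.aestronglyMeasurable (μ := γ.map Prod.snd))
    have h2 := integral_map hT.aemeasurable
      ((continuous_norm.pow 2).stronglyMeasurable.aestronglyMeasurable (μ := μ.map T))
    rw [hsnd] at h1
    refine h1.symm.trans ?_
    exact h2
  -- expand both quadratic costs
  have hL : ∫ x, (1/2 : ℝ) * ‖x - T x‖ ^ 2 ∂μ
      = (1/2) * (∫ x, ‖x‖ ^ 2 ∂μ) + (1/2) * (∫ x, ‖T x‖ ^ 2 ∂μ) - ∫ x, ⟪x, T x⟫ ∂μ := by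
    have e : ∀ x : E, (1/2 : ℝ) * ‖x - T x‖ ^ 2
        = ((1/2) * ‖x‖ ^ 2 + (1/2) * ‖T x‖ ^ 2) - ⟪x, T x⟫ := by
      intro x
      rw [norm_sub_sq_real]
      ring
    have hI1 : Integrable (fun x : E => (1/2 : ℝ) * ‖x‖ ^ 2 + (1/2 : ℝ) * ‖T x‖ ^ 2) μ :=
      (hμ2.const_mul _).add (hT2.const_mul _)
    rw [integral_congr_ae (Filter.Eventually.of_forall e),
      integral_sub hI1 h_inner_int_μ,
      integral_add (hμ2.const_mul _) (hT2.const_mul _), integral_const_mul, integral_const_mul]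
  have hR : ∫ p, (1/2 : ℝ) * ‖p.1 - p.2‖ ^ 2 ∂γ
      = (1/2) * (∫ p, ‖p.1‖ ^ 2 ∂γ) + (1/2) * (∫ p, ‖p.2‖ ^ 2 ∂γ) - ∫ p, ⟪p.1, p.2⟫ ∂γ := by
    have e : ∀ p : E × E, (1/2 : ℝ) * ‖p.1 - p.2‖ ^ 2
        = ((1/2) * ‖p.1‖ ^ 2 + (1/2) * ‖p.2‖ ^ 2) - ⟪p.1, p.2⟫ := by
      intro p
      rw [norm_sub_sq_real]
      ring
    have hI1 : Integrable (fun p : E × E => (1/2 : ℝ) * ‖p.1‖ ^ 2 + (1/2 : ℝ) * ‖p.2‖ ^ 2) γ :=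
      (h_n1_γ.const_mul _).add (h_n2_γ.const_mul _)
    rw [integral_congr_ae (Filter.Eventually.of_forall e),
      integral_sub hI1 h_inner_int_γ,
      integral_add (h_n1_γ.const_mul _) (h_n2_γ.const_mul _), integral_const_mul,
      integral_const_mul]
  rw [hL, hR, h_m1, h_m2]
  linarith

end BrenierAux

/-- Optimality in non-compact spaces: if `μ` is a Borel probability measure on `ℝᵈ` with finite
second moment, `u` is convex and `μ`-a.e. differentiable with gradient `T` having finite second
moment, then `T` is an optimal transport map from `μ` to `ν = T_#μ` for the quadratic cost:
every coupling `γ` of `μ` and `ν` has quadratic cost at least `∫ ½‖x - T(x)‖² dμ`. -/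
theorem brenier_map_optimal (d : ℕ) (hd : 1 ≤ d)
    (μ : Measure (EuclideanSpace ℝ (Fin d))) [IsProbabilityMeasure μ]
    (hμ2 : Integrable (fun x => ‖x‖ ^ 2) μ)
    (u : EuclideanSpace ℝ (Fin d) → ℝ) (hconv : ConvexOn ℝ Set.univ u)
    (hui : Integrable u μ)
    (T : EuclideanSpace ℝ (Fin d) → EuclideanSpace ℝ (Fin d)) (hT : Measurable T)
    (hTgrad : ∀ᵐ x ∂μ, HasGradientAt u (T x) x)
    (hT2 : Integrable (fun x => ‖T x‖ ^ 2) μ)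
    (γ : Measure (EuclideanSpace ℝ (Fin d) × EuclideanSpace ℝ (Fin d)))
    [IsProbabilityMeasure γ]
    (hfst : γ.map Prod.fst = μ) (hsnd : γ.map Prod.snd = μ.map T) :
    (∫ x, (1/2 : ℝ) * ‖x - T x‖ ^ 2 ∂μ)
      ≤ ∫ p, (1/2 : ℝ) * ‖p.1 - p.2‖ ^ 2 ∂γ :=
  brenier_main μ hμ2 u hconv hui T hT hTgrad hT2 γ hfst hsnd
end
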